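/- arXiv:2209.01669 — 2 statements merged into one kernel-verified Lean document; each statement's English description precedes it below -/
import Mathlib

section
/- Let p be an odd prime and n ≥ 1. Let φ ∈ BSymb_{Γ₁(p)}(𝒱₀(Z/pZ)) be a weight-0 boundary modular symbol of level Γ₁(p) with values in Z/pZ, and set C = Σ_{a ∈ (Z/pZ)^×} (φ({∞})(1) − φ({a/p})(1)) ∈ Z/pZ. Then, writing T = γ_n − 1 for a generator γ_n of 𝒢_n, the level-n Mazur–Tate element satisfies θ_{n,φ} ≡ C · T^{p^n − 1} (mod p). -/
noncomputable section

open scoped Classical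

/-- The projective line over `ℚ`, realized as the projectivization of `ℚ²`. -/
abbrev P1 : Type := Projectivization ℚ (Fin 2 → ℚ)

/-- The point of `P¹(ℚ)` corresponding to a rational number `x` (the class of `(x, 1)`). -/
def ratPt (x : ℚ) : P1 :=
  Projectivization.mk ℚ ![x, 1] (fun h => by simpa using congrFun h 1)

/-- The point `∞ ∈ P¹(ℚ)` (the class of `(1, 0)`). -/
def inftyPt : P1 :=
  Projectivization.mk ℚ ![1, 0] (fun h => by simpa using congrFun h 0)

lemma mulVecLin_injective {g : Matrix (Fin 2) (Fin 2) ℚ} (hg : g.det ≠ 0) :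
    Function.Injective g.mulVecLin := by
  intro x y hxy
  have h1 := congrArg g⁻¹.mulVec hxy
  simp only [Matrix.mulVecLin_apply, Matrix.mulVec_mulVec,
    Matrix.nonsing_inv_mul g (isUnit_iff_ne_zero.2 hg), Matrix.one_mulVec] at h1
  exact h1

/-- The action of an integer matrix with nonzero determinant on `P¹(ℚ)` by linear fractional
transformations (acting on column vectors); singular matrices act as the identity (junk). -/
def actP1 (g : Matrix (Fin 2) (Fin 2) ℤ) : P1 → P1 :=
  if hg : (g.map ((↑) : ℤ → ℚ)).det ≠ 0 then
    Projectivization.map (g.map ((↑) : ℤ → ℚ)).mulVecLin (mulVecLin_injective hg)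
  else id

/-- The group `Δ` of divisors on `P¹(ℚ)`. -/
abbrev Dvs : Type := P1 →₀ ℤ

/-- The degree map on divisors. -/
def deg : Dvs →+ ℤ := Finsupp.liftAddHom fun _ => AddMonoidHom.id ℤ

/-- The group `Δ⁰` of degree-zero divisors on `P¹(ℚ)`. -/
abbrev Dvs0 : Type := deg.ker

/-- The action of an integer matrix on divisors. -/
def divAct (g : Matrix (Fin 2) (Fin 2) ℤ) : Dvs →+ Dvs :=
  Finsupp.mapDomain.addMonoidHom (actP1 g)

lemma deg_divAct (g : Matrix (Fin 2) (Fin 2) ℤ) (D : Dvs) :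
    deg (divAct g D) = deg D := by
  have h : deg.comp (divAct g) = deg := by
    apply Finsupp.addHom_ext
    intro x m
    simp [divAct, deg, Finsupp.mapDomain.addMonoidHom_apply, Finsupp.mapDomain_single,
      Finsupp.liftAddHom_apply, Finsupp.sum_single_index]
  exact DFunLike.congr_fun h D

/-- The action of an integer matrix on degree-zero divisors. -/
def div0Act (g : Matrix (Fin 2) (Fin 2) ℤ) : Dvs0 →+ Dvs0 :=
  AddMonoidHom.mk' (fun D => ⟨divAct g D.1, by
      have hD := D.2
      rw [AddMonoidHom.mem_ker] at hD ⊢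
      rw [deg_divAct]; exact hD⟩)
    (fun D E => by
      apply Subtype.ext
      simp [map_add])

/-- The degree-zero divisor `{x} - {y}`. -/
def dvsr (x y : P1) : Dvs0 :=
  ⟨Finsupp.single x 1 - Finsupp.single y 1, by
    rw [AddMonoidHom.mem_ker, map_sub]
    simp [deg, Finsupp.liftAddHom_apply, Finsupp.sum_single_index]⟩

/-- The right action `P ↦ P|γ` of a `2 × 2` matrix `γ = (a b; c d)` on two-variable polynomials,
given by `(P|γ)(X, Y) = P (dX - cY, -bX + aY)`.  On the homogeneous polynomials of degree `k`
this is the right action on `V_k(R)`. -/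
def polyAct {R : Type} [CommRing R] (g : Matrix (Fin 2) (Fin 2) R)
    (P : MvPolynomial (Fin 2) R) : MvPolynomial (Fin 2) R :=
  MvPolynomial.aeval
    ![MvPolynomial.C (g 1 1) * MvPolynomial.X 0 - MvPolynomial.C (g 1 0) * MvPolynomial.X 1,
      MvPolynomial.C (g 0 0) * MvPolynomial.X 1 - MvPolynomial.C (g 0 1) * MvPolynomial.X 0] P

/-- Evaluation of a two-variable polynomial at `(X, Y) = (0, 1)`. -/
def evalXY {R : Type} [CommRing R] (P : MvPolynomial (Fin 2) R) : R :=
  MvPolynomial.eval ![0, 1] P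

/-- `x` and `z` lie in the same `Γ₁(N)`-orbit (cusp) of `P¹(ℚ)`. -/
def inOrb (N : ℕ) (x z : P1) : Prop :=
  ∃ γ ∈ CongruenceSubgroup.Gamma1 N, actP1 γ.1 x = z

/-- The Ramanujan tau function: the coefficients of `q ∏ (1 - qⁿ)²⁴`. -/
def ramanujanTau (n : ℕ) : ℤ :=
  (Polynomial.X * ∏ m ∈ Finset.Icc 1 n, (1 - Polynomial.X ^ m) ^ 24 : Polynomial ℤ).coeff n

/-- A coset representative `(1 j; 0 ℓ)` for the Hecke operator `T_ℓ`. -/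
def heckeMat (ℓ j : ℕ) : Matrix (Fin 2) (Fin 2) ℤ := !![1, (j : ℤ); 0, (ℓ : ℤ)]

/-- The coset representative `(ℓ 0; 0 1)` for the Hecke operator `T_ℓ`. -/
def heckeMatInf (ℓ : ℕ) : Matrix (Fin 2) (Fin 2) ℤ := !![(ℓ : ℤ), 0; 0, 1]

/-- The Hecke operator `T_ℓ` on (level one) modular symbols `Δ⁰ → V_k(R)`. -/
def heckeT {R : Type} [CommRing R] (ℓ : ℕ) (φ : Dvs0 →+ MvPolynomial (Fin 2) R)
    (D : Dvs0) : MvPolynomial (Fin 2) R :=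
  (∑ j ∈ Finset.range ℓ,
      polyAct ((heckeMat ℓ j).map (Int.cast : ℤ → R)) (φ (div0Act (heckeMat ℓ j) D)))
    + polyAct ((heckeMatInf ℓ).map (Int.cast : ℤ → R)) (φ (div0Act (heckeMatInf ℓ) D))

instance neZero_pow_succ (p n : ℕ) [hp : Fact p.Prime] : NeZero (p ^ (n + 1)) :=
  ⟨pow_ne_zero _ hp.out.ne_zero⟩

instance neZero_of_prime (p : ℕ) [hp : Fact p.Prime] : NeZero p := ⟨hp.out.ne_zero⟩

/-- The level-`n` Mazur–Tate element attached to the coefficient data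
`c : (ℤ/p^{n+1})^× → R` via the projection `π : (ℤ/p^{n+1})^× ↠ 𝒢ₙ`:
`θ = ∑_a c(a) • σ_{π(a)}` in the group ring `R[𝒢ₙ]`. -/
def MTel {R : Type} [CommRing R] {G : Type} [CommGroup G] (p n : ℕ)
    [NeZero (p ^ (n + 1))] (π : (ZMod (p ^ (n + 1)))ˣ →* G)
    (c : (ZMod (p ^ (n + 1)))ˣ → R) : MonoidAlgebra R G :=
  ∑ a : (ZMod (p ^ (n + 1)))ˣ, c a • (MonoidAlgebra.of R G (π a))

/-- `F ∈ ℤ_p[𝒢]` has Iwasawa invariants `μ(F) = m` and `λ(F) = l`, computed with respect to the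
generator `γ` of `𝒢` (a cyclic group of order `N`), by writing `F = ∑_{i<N} aᵢ Tⁱ` with
`T = γ - 1`: `m` is the minimal `p`-adic valuation of the `aᵢ` and `l` is the first index
where it is attained. -/
def hasMuLambda (p : ℕ) [Fact p.Prime] {G : Type} [CommGroup G] (N : ℕ) (γ : G)
    (F : MonoidAlgebra ℤ_[p] G) (m l : ℕ) : Prop :=
  ∃ a : ℕ → ℤ_[p],
    F = ∑ i ∈ Finset.range N, a i • (MonoidAlgebra.of ℤ_[p] G γ - 1) ^ i ∧
    (∀ i < N, (p : ℤ_[p]) ^ m ∣ a i) ∧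
    (∀ i < l, (p : ℤ_[p]) ^ (m + 1) ∣ a i) ∧
    ¬ (p : ℤ_[p]) ^ (m + 1) ∣ a l

end
noncomputable section
open scoped Classical

/-- The reduction-mod-`p` of the weight-0 Eisenstein boundary symbol
`φ_{0, ω_p^a, 𝟙} = ∑_{x mod p} (ω_p^a)⁻¹(x) φ_{0,x,p}` (evaluated at the polynomial `1`),
viewed as the function on `P¹(ℚ)` which, at `z`, sums `ω(x)^{p-1-a}` over those
`x ∈ {1, …, p-1}` whose cusp `x/p` contains `z`. -/
def phiE (p : ℕ) [Fact p.Prime] (ω : ℤ → ℤ_[p]) (a : ℕ) (z : P1) : ℤ_[p] :=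
  ∑ x ∈ Finset.Ico 1 p,
    if inOrb p (ratPt ((x : ℚ) / (p : ℚ))) z then ω (x : ℤ) ^ (p - 1 - a) else 0

/-- The boundary symbol `φ₉ ∈ Hom_{Γ₁(27)}(Δ, ℤ/9ℤ)`, constant on `Γ₁(27)`-cusps, with the
explicit values from the paper. -/
def phi9 (z : P1) : ZMod 9 :=
  if inOrb 27 (ratPt (1/9)) z ∨ inOrb 27 (ratPt (8/27)) z ∨ inOrb 27 (ratPt (10/27)) z ∨
     inOrb 27 (ratPt (8/9)) z ∨ inOrb 27 inftyPt z then 0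
  else if inOrb 27 (ratPt 0) z ∨ inOrb 27 (ratPt (1/12)) z ∨ inOrb 27 (ratPt (1/10)) z ∨
     inOrb 27 (ratPt (1/8)) z ∨ inOrb 27 (ratPt (5/12)) z then 1
  else if inOrb 27 (ratPt (2/27)) z ∨ inOrb 27 (ratPt (2/9)) z ∨ inOrb 27 (ratPt (7/27)) z ∨
     inOrb 27 (ratPt (11/27)) z ∨ inOrb 27 (ratPt (7/9)) z then 3
  else if inOrb 27 (ratPt (1/11)) z ∨ inOrb 27 (ratPt (1/7)) z ∨ inOrb 27 (ratPt (1/3)) z ∨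
     inOrb 27 (ratPt (1/2)) z ∨ inOrb 27 (ratPt (2/3)) z then 4
  else if inOrb 27 (ratPt (4/27)) z ∨ inOrb 27 (ratPt (5/27)) z ∨ inOrb 27 (ratPt (4/9)) z ∨
     inOrb 27 (ratPt (13/27)) z ∨ inOrb 27 (ratPt (5/9)) z then 6
  else if inOrb 27 (ratPt (1/13)) z ∨ inOrb 27 (ratPt (1/6)) z ∨ inOrb 27 (ratPt (1/5)) z ∨
     inOrb 27 (ratPt (1/4)) z ∨ inOrb 27 (ratPt (5/6)) z then 7
  else 0

end


section Aux
open Polynomial in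
lemma geom_poly (p : ℕ) [Fact p.Prime] (n : ℕ) :
    (∑ i ∈ Finset.range (p ^ n), (Polynomial.X : Polynomial (ZMod p)) ^ i) =
      (Polynomial.X - 1) ^ (p ^ n - 1) := by
  have hN : 1 ≤ p ^ n := Nat.one_le_pow _ _ (Fact.out : p.Prime).pos
  have h1 : (Polynomial.X - 1 : Polynomial (ZMod p)) ≠ 0 := by
    simpa using Polynomial.X_sub_C_ne_zero (1 : ZMod p)
  apply mul_right_cancel₀ h1
  rw [geom_sum_mul, ← pow_succ, Nat.sub_add_cancel hN]
  have := sub_pow_char_pow (p := p) (x := (Polynomial.X : Polynomial (ZMod p))) (y := 1) (n := n)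
  simp at this
  rw [this]

lemma sum_group_eq {p : ℕ} [Fact p.Prime] (n : ℕ) (G : Type) [CommGroup G] [Fintype G]
    (hG : Fintype.card G = p ^ n) (γ : G) (hγ : orderOf γ = p ^ n) :
    (∑ g : G, MonoidAlgebra.of (ZMod p) G g) =
      (MonoidAlgebra.of (ZMod p) G γ - 1) ^ (p ^ n - 1) := by
  have hbij : Function.Bijective (fun i : Fin (p ^ n) => γ ^ (i : ℕ)) := by
    rw [Fintype.bijective_iff_injective_and_card]
    refine ⟨fun i j hij => ?_, by simp [hG]⟩
    exact Fin.ext (pow_injOn_Iio_orderOf (by simpa [hγ] using i.2) (by simpa [hγ] using j.2) hij)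
  have h1 : (∑ g : G, MonoidAlgebra.of (ZMod p) G g) =
      ∑ i ∈ Finset.range (p ^ n), (MonoidAlgebra.of (ZMod p) G γ) ^ i := by
    rw [← Fintype.sum_bijective _ hbij (fun i : Fin (p ^ n) => (MonoidAlgebra.of (ZMod p) G γ) ^ (i : ℕ)) _ (fun i => (map_pow (MonoidAlgebra.of (ZMod p) G) γ (i : ℕ)).symm),
      Fin.sum_univ_eq_sum_range]
  have h2 := congrArg (Polynomial.aeval (MonoidAlgebra.of (ZMod p) G γ)) (geom_poly p n)
  simp only [map_sum, map_pow, map_sub, Polynomial.aeval_X, Polynomial.aeval_one] at h2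
  rw [h1, h2]

lemma card_ker_eq {G H : Type} [Group G] [Group H] [Fintype G]
    (f : G →* H) (hf : Function.Surjective f) :
    Nat.card H * Nat.card f.ker = Nat.card G := by
  rw [Subgroup.card_eq_card_quotient_mul_card_subgroup f.ker]
  congr 1
  exact (Nat.card_congr (QuotientGroup.quotientKerEquivOfSurjective f hf).toEquiv).symm

lemma prod_bijective (p : ℕ) [Fact p.Prime] (n : ℕ)
    (G : Type) [CommGroup G] [Fintype G] (hG : Fintype.card G = p ^ n)
    (π : (ZMod (p ^ (n + 1)))ˣ →* G) (hπ : Function.Surjective π) :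
    Function.Bijective ((ZMod.unitsMap (dvd_pow_self p (Nat.succ_ne_zero n))).prod π) := by
  have hp : p.Prime := Fact.out
  have hcardU : Nat.card (ZMod (p ^ (n + 1)))ˣ = p ^ n * (p - 1) := by
    rw [Nat.card_eq_fintype_card, ZMod.card_units_eq_totient,
      Nat.totient_prime_pow hp (Nat.succ_pos n)]
    simp
  have hcardU1 : Nat.card (ZMod p)ˣ = p - 1 := by
    rw [Nat.card_eq_fintype_card, ZMod.card_units_eq_totient, Nat.totient_prime hp]
  have hsurj1 : Function.Surjective (ZMod.unitsMap (dvd_pow_self p (Nat.succ_ne_zero n))) :=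
    ZMod.unitsMap_surjective _
  have hk1 : Nat.card (ZMod.unitsMap (dvd_pow_self p (Nat.succ_ne_zero n))).ker = p ^ n := by
    have h := card_ker_eq (H := (ZMod p)ˣ) _ hsurj1
    rw [hcardU1, hcardU] at h
    have hp1 : 0 < p - 1 := Nat.sub_pos_of_lt hp.one_lt
    exact Nat.eq_of_mul_eq_mul_left hp1 (by rw [h, Nat.mul_comm])
  have hk2 : Nat.card π.ker = p - 1 := by
    have h := card_ker_eq _ hπ
    rw [Nat.card_eq_fintype_card, hG, hcardU] at h
    exact Nat.eq_of_mul_eq_mul_left (pow_pos hp.pos n) h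
  rw [Fintype.bijective_iff_injective_and_card]
  constructor
  · rw [injective_iff_map_eq_one]
    intro x hx
    rw [MonoidHom.prod_apply, Prod.mk_eq_one] at hx
    have h1 : orderOf x ∣ p ^ n := hk1 ▸ Subgroup.orderOf_dvd_natCard _ hx.1
    have h2 : orderOf x ∣ p - 1 := hk2 ▸ Subgroup.orderOf_dvd_natCard _ hx.2
    have hcop : Nat.Coprime (p ^ n) (p - 1) := by
      apply Nat.Coprime.pow_left
      rw [Nat.Prime.coprime_iff_not_dvd hp]
      exact Nat.not_dvd_of_pos_of_lt (Nat.sub_pos_of_lt hp.one_lt) (Nat.sub_lt hp.pos one_pos)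
    have ho : orderOf x = 1 := Nat.eq_one_of_dvd_coprimes hcop h1 h2
    exact orderOf_eq_one_iff.mp ho
  · rw [Fintype.card_prod, hG, ← Nat.card_eq_fintype_card (α := (ZMod p)ˣ), hcardU1,
      ← Nat.card_eq_fintype_card, hcardU, Nat.mul_comm]

lemma vec_ne_zero (x y : ℚ) (hy : y ≠ 0) : ![x, y] ≠ (0 : Fin 2 → ℚ) :=
  fun h => hy (by simpa using congrFun h 1)

lemma ratPt_eq_mk (x y : ℚ) (hy : y ≠ 0) :
    ratPt (x / y) = Projectivization.mk ℚ ![x, y] (vec_ne_zero x y hy) := by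
  rw [ratPt, Projectivization.mk_eq_mk_iff']
  refine ⟨y⁻¹, ?_⟩
  funext i
  fin_cases i <;> simp [div_eq_inv_mul, inv_mul_cancel₀ hy]

lemma actP1_mk (g : Matrix.SpecialLinearGroup (Fin 2) ℤ) (v : Fin 2 → ℚ) (hv : v ≠ 0)
    (h2 : ((g : Matrix (Fin 2) (Fin 2) ℤ).map ((↑) : ℤ → ℚ)).mulVec v ≠ 0) :
    actP1 (g : Matrix (Fin 2) (Fin 2) ℤ) (Projectivization.mk ℚ v hv) =
      Projectivization.mk ℚ _ h2 := by
  have hdet : ((g : Matrix (Fin 2) (Fin 2) ℤ).map ((↑) : ℤ → ℚ)).det ≠ 0 := by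
    have h3 : ((g : Matrix (Fin 2) (Fin 2) ℤ).map ((↑) : ℤ → ℚ))
        = (Int.castRingHom ℚ).mapMatrix (g : Matrix (Fin 2) (Fin 2) ℤ) := rfl
    rw [h3, ← RingHom.map_det, g.2]
    norm_num
  rw [actP1, dif_pos hdet, Projectivization.map_mk]
  rfl

lemma phi_shift (p : ℕ) [Fact p.Prime] (φ : P1 → ZMod p)
    (hφ : ∀ γ ∈ CongruenceSubgroup.Gamma1 p, ∀ z : P1, φ (actP1 γ.1 z) = φ z)
    (X Y : ℤ) (h : (p : ℤ) ∣ Y - X) :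
    φ (ratPt ((X : ℚ) / (p : ℚ))) = φ (ratPt ((Y : ℚ) / (p : ℚ))) := by
  have hp0 : ((p : ℚ)) ≠ 0 := Nat.cast_ne_zero.mpr (Fact.out : p.Prime).ne_zero
  obtain ⟨t, ht⟩ := h
  set U : Matrix.SpecialLinearGroup (Fin 2) ℤ :=
    ⟨!![1, t; 0, 1], by simp [Matrix.det_fin_two_of]⟩ with hU
  have hUmem : U ∈ CongruenceSubgroup.Gamma1 p := by
    rw [CongruenceSubgroup.Gamma1_mem]
    simp [hU]
  have hvX := vec_ne_zero (X : ℚ) (p : ℚ) hp0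
  have key := hφ U hUmem (Projectivization.mk ℚ ![(X : ℚ), (p : ℚ)] hvX)
  have hact : actP1 (U : Matrix (Fin 2) (Fin 2) ℤ) (Projectivization.mk ℚ ![(X : ℚ), (p : ℚ)] hvX)
      = Projectivization.mk ℚ ![(Y : ℚ), (p : ℚ)] (vec_ne_zero _ _ hp0) := by
    have h2 : ((U : Matrix (Fin 2) (Fin 2) ℤ).map ((↑) : ℤ → ℚ)).mulVec ![(X : ℚ), (p : ℚ)]
        = ![(Y : ℚ), (p : ℚ)] := by
      funext i
      have htQ : (Y : ℚ) - X = p * t := by exact_mod_cast congrArg (fun z : ℤ => (z : ℚ)) ht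
      fin_cases i <;>
        simp [hU, Matrix.mulVec, dotProduct, Fin.sum_univ_two, Matrix.map_apply] <;>
        linarith [htQ]
    have hne := vec_ne_zero (Y : ℚ) (p : ℚ) hp0
    have h2' : ((U : Matrix (Fin 2) (Fin 2) ℤ).map ((↑) : ℤ → ℚ)).mulVec ![(X : ℚ), (p : ℚ)] ≠ 0 :=
      h2 ▸ hne
    rw [actP1_mk U _ hvX h2']
    exact (Projectivization.mk_eq_mk_iff' ℚ _ _ h2' hne).mpr ⟨1, by rw [one_smul, h2]⟩
  rw [ratPt_eq_mk _ _ hp0, ratPt_eq_mk _ _ hp0, ← hact, key]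

lemma phi_reduce (p : ℕ) [Fact p.Prime] (n : ℕ) (φ : P1 → ZMod p)
    (hφ : ∀ γ ∈ CongruenceSubgroup.Gamma1 p, ∀ z : P1, φ (actP1 γ.1 z) = φ z)
    (A B : ℤ) (hA : IsCoprime A ((p : ℤ) ^ (n + 1))) (hAB : (p : ℤ) ∣ A - B) :
    φ (ratPt ((A : ℚ) / (p : ℚ) ^ (n + 1))) = φ (ratPt ((B : ℚ) / (p : ℚ))) := by
  have hp : p.Prime := Fact.out
  have hp0 : ((p : ℚ)) ≠ 0 := Nat.cast_ne_zero.mpr hp.ne_zero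
  have hpP0 : ((p : ℚ)) ^ (n + 1) ≠ 0 := pow_ne_zero _ hp0
  obtain ⟨u, v, huv⟩ := hA
  obtain ⟨c, δ, hkey, hδmod⟩ : ∃ c δ : ℤ, c * A + δ * (p : ℤ) ^ n = 1 ∧ (p : ℤ) ∣ δ - 1 :=
    ⟨u * (1 - (p : ℤ) ^ n), 1 + v * (1 - (p : ℤ) ^ n) * p,
      by linear_combination (1 - (p : ℤ) ^ n) * huv, ⟨v * (1 - (p : ℤ) ^ n), by ring⟩⟩
  have hδp : ((δ : ZMod p)) = 1 := by
    have h0 : ((δ - 1 : ℤ) : ZMod p) = 0 := (ZMod.intCast_zmod_eq_zero_iff_dvd _ p).mpr hδmod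
    push_cast at h0
    linear_combination h0
  have hcop2 : IsCoprime δ ((p : ℤ) * c) := by
    obtain ⟨k, hk⟩ := hδmod
    exact IsCoprime.mul_right ⟨1, -k, by linear_combination hk⟩
      ⟨(p : ℤ) ^ n, A, by linear_combination hkey⟩
  obtain ⟨α, β, hαβ⟩ := hcop2
  set g : Matrix.SpecialLinearGroup (Fin 2) ℤ :=
    ⟨!![α, -β; (p : ℤ) * c, δ], by
      rw [Matrix.det_fin_two_of]; linear_combination hαβ⟩ with hg
  have hαp : ((α : ZMod p)) = 1 := by
    have h1 := congrArg (fun z : ℤ => (z : ZMod p)) hαβ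
    push_cast at h1
    simp [hδp] at h1
    exact h1
  have hgmem : g ∈ CongruenceSubgroup.Gamma1 p := by
    rw [CongruenceSubgroup.Gamma1_mem]
    refine ⟨?_, ?_, ?_⟩ <;> · simp [hg, hαp, hδp]
  have hvA := vec_ne_zero (A : ℚ) ((p : ℚ) ^ (n + 1)) hpP0
  set A'' : ℤ := α * A - β * (p : ℤ) ^ (n + 1) with hA''
  have hkeyQ : (c : ℚ) * A + δ * (p : ℚ) ^ n = 1 := by
    have h0 := congrArg (fun z : ℤ => (z : ℚ)) hkey
    push_cast at h0
    exact h0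
  have h2 : ((g : Matrix (Fin 2) (Fin 2) ℤ).map ((↑) : ℤ → ℚ)).mulVec ![(A : ℚ), (p : ℚ) ^ (n + 1)]
      = ![(A'' : ℚ), (p : ℚ)] := by
    funext i
    fin_cases i
    · simp [hg, hA'', Matrix.mulVec, dotProduct, Fin.sum_univ_two, Matrix.map_apply]
      push_cast
      ring
    · simp [hg, Matrix.mulVec, dotProduct, Fin.sum_univ_two, Matrix.map_apply]
      push_cast
      linear_combination (p : ℚ) * hkeyQ
  have hne := vec_ne_zero (A'' : ℚ) (p : ℚ) hp0
  have h2' : ((g : Matrix (Fin 2) (Fin 2) ℤ).map ((↑) : ℤ → ℚ)).mulVec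
      ![(A : ℚ), (p : ℚ) ^ (n + 1)] ≠ 0 := h2 ▸ hne
  have hact : actP1 (g : Matrix (Fin 2) (Fin 2) ℤ)
      (Projectivization.mk ℚ ![(A : ℚ), (p : ℚ) ^ (n + 1)] hvA)
      = Projectivization.mk ℚ ![(A'' : ℚ), (p : ℚ)] hne := by
    rw [actP1_mk g _ hvA h2']
    exact (Projectivization.mk_eq_mk_iff' ℚ _ _ h2' hne).mpr ⟨1, by rw [one_smul, h2]⟩
  have step1 : φ (ratPt ((A : ℚ) / (p : ℚ) ^ (n + 1))) = φ (ratPt ((A'' : ℚ) / (p : ℚ))) := by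
    rw [ratPt_eq_mk _ _ hpP0, ratPt_eq_mk _ _ hp0, ← hact, hφ g hgmem]
  rw [step1]
  apply phi_shift p φ hφ
  have hdα : (p : ℤ) ∣ α - 1 := by
    rw [← ZMod.intCast_zmod_eq_zero_iff_dvd, Int.cast_sub, Int.cast_one, sub_eq_zero]
    exact hαp
  obtain ⟨w, hw⟩ := hdα
  obtain ⟨w2, hw2⟩ := hAB
  exact ⟨-(w * A) + β * (p : ℤ) ^ n - w2, by
    rw [hA'']; linear_combination (-(A : ℤ)) * hw - hw2⟩

end Aux

/-- The key computation in Theorem 4.6: let `p` be an odd prime, `n ≥ 1`, and let `φ` be a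
weight-0 boundary modular symbol of level `Γ₁(p)` with values in `ℤ/pℤ` (a `Γ₁(p)`-invariant
function on `P¹(ℚ)`).  Set `C = ∑_{a ∈ (ℤ/pℤ)ˣ} (φ({∞})(1) - φ({a/p})(1))`.  Then, in
`(ℤ/pℤ)[𝒢ₙ]` (where `𝒢ₙ` is the cyclic quotient of order `pⁿ` of `(ℤ/p^{n+1}ℤ)ˣ` under `πₙ`),
the level-`n` Mazur–Tate element satisfies `θ_{n,φ} = C · T^{pⁿ - 1}` where `T = γₙ - 1` for a
generator `γₙ` of `𝒢ₙ`. -/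
theorem mazur_tate_of_boundary_symbol_eq
    (p : ℕ) [Fact p.Prime] (hodd : Odd p) (n : ℕ) (hn : 1 ≤ n)
    (φ : P1 → ZMod p)
    (hφ : ∀ γ ∈ CongruenceSubgroup.Gamma1 p, ∀ z : P1, φ (actP1 γ.1 z) = φ z)
    (G : Type) [CommGroup G] [Fintype G] (hG : Fintype.card G = p ^ n)
    (π : (ZMod (p ^ (n + 1)))ˣ →* G) (hπ : Function.Surjective π)
    (γ : G) (hγ : orderOf γ = p ^ n) :
    MTel p n π (fun a =>
        φ inftyPt - φ (ratPt (((a : ZMod (p ^ (n + 1))).val : ℚ) / (p : ℚ) ^ (n + 1)))) =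
      (∑ b : (ZMod p)ˣ, (φ inftyPt - φ (ratPt (((b : ZMod p).val : ℚ) / (p : ℚ))))) •
        (MonoidAlgebra.of (ZMod p) G γ - 1) ^ (p ^ n - 1) := by
  have hp : p.Prime := Fact.out
  have hdvd : p ∣ p ^ (n + 1) := dvd_pow_self p (Nat.succ_ne_zero n)
  have hbij := prod_bijective p n G hG π hπ
  have hcoef : ∀ a : (ZMod (p ^ (n + 1)))ˣ,
      φ (ratPt (((a : ZMod (p ^ (n + 1))).val : ℚ) / (p : ℚ) ^ (n + 1)))
        = φ (ratPt ((((ZMod.unitsMap (dvd_pow_self p (Nat.succ_ne_zero n)) a : (ZMod p)ˣ)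
            : ZMod p).val : ℚ) / (p : ℚ))) := by
    intro a
    set b := ZMod.unitsMap (dvd_pow_self p (Nat.succ_ne_zero n)) a with hb
    have hA : IsCoprime (((a : ZMod (p ^ (n + 1))).val : ℤ)) ((p : ℤ) ^ (n + 1)) := by
      have h1 : Nat.Coprime (a : ZMod (p ^ (n + 1))).val (p ^ (n + 1)) :=
        ZMod.val_coe_unit_coprime a
      have h2 := h1.isCoprime
      push_cast at h2
      exact h2
    have hcast : (((a : ZMod (p ^ (n + 1))).val : ℕ) : ZMod p)
        = (((b : ZMod p).val : ℕ) : ZMod p) := by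
      rw [hb]
      simp only [ZMod.natCast_val, ZMod.cast_id', id_eq, ZMod.unitsMap]
      rw [Units.coe_map]
      simp [ZMod.castHom_apply]
    have hAB : (p : ℤ) ∣ (((a : ZMod (p ^ (n + 1))).val : ℤ) - ((b : ZMod p).val : ℤ)) := by
      rw [← ZMod.intCast_zmod_eq_zero_iff_dvd]
      push_cast
      rw [show ((((a : ZMod (p ^ (n + 1))).val : ℕ)) : ZMod p)
          = (((b : ZMod p).val : ℕ) : ZMod p) from hcast]
      ring
    have h3 := phi_reduce p n φ hφ _ _ hA hAB
    push_cast at h3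
    exact h3
  unfold MTel
  rw [Fintype.sum_bijective ((ZMod.unitsMap (dvd_pow_self p (Nat.succ_ne_zero n))).prod π) hbij _
    (fun x : (ZMod p)ˣ × G =>
      (φ inftyPt - φ (ratPt (((x.1 : ZMod p).val : ℚ) / (p : ℚ)))) •
        MonoidAlgebra.of (ZMod p) G x.2)
    (fun a => by simp only [MonoidHom.prod_apply]; rw [hcoef a])]
  rw [Fintype.sum_prod_type]
  simp_rw [← Finset.smul_sum]
  rw [← Finset.sum_smul, sum_group_eq n G hG γ hγ]
end

section
/- Let p be an odd prime and n ≥ 1 an integer. If φ ∈ BSymb_{Γ₁(p)}(𝒱₀(Z/pZ)) is a weight-0 boundary modular symbol of level Γ₁(p) with values in Z/pZ such that Σ_{a ∈ (Z/pZ)^×} (φ({∞})(1) − φ({a/p})(1)) ≢ 0 (mod p), then the Iwasawa λ-invariant of the level-n Mazur–Tate element attached to φ satisfies λ(θ_{n,φ}) = p^n − 1. -/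
noncomputable section
open scoped Classical

namespace MTaux
open Finset

lemma hockey (N i : ℕ) : ∑ j ∈ Finset.range N, j.choose i = N.choose (i + 1) := by
  induction N with
  | zero => simp
  | succ N ih =>
    rw [Finset.sum_range_succ, ih, Nat.choose_succ_succ (N) i, add_comm]

lemma vec_ne_zero (x y : ℚ) (hy : y ≠ 0) : ![x, y] ≠ 0 := by
  intro h; apply hy; simpa using congrFun h 1

lemma ratPt_mk (x y : ℚ) (hy : y ≠ 0) :
    ratPt (x / y) = Projectivization.mk ℚ ![x, y] (vec_ne_zero x y hy) := by
  rw [ratPt, Projectivization.mk_eq_mk_iff']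
  refine ⟨y⁻¹, ?_⟩
  funext i
  fin_cases i <;> simp [hy, div_eq_mul_inv, mul_comm]


lemma det_map_cast (g : Matrix (Fin 2) (Fin 2) ℤ) :
    (g.map ((↑) : ℤ → ℚ)).det = (g.det : ℚ) := by
  rw [Matrix.det_fin_two, Matrix.det_fin_two]
  simp [Matrix.map_apply]

lemma actP1_mk (g : Matrix (Fin 2) (Fin 2) ℤ) (hdet : g.det = 1) (v : Fin 2 → ℚ)
    (hv : v ≠ 0) :
    actP1 g (Projectivization.mk ℚ v hv) =
      Projectivization.mk ℚ ((g.map ((↑) : ℤ → ℚ)).mulVec v)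
        (by
          have hg : (g.map ((↑) : ℤ → ℚ)).det ≠ 0 := by
            rw [det_map_cast, hdet]; norm_num
          intro h
          exact hv (mulVecLin_injective hg (by simpa using h))) := by
  have hg : (g.map ((↑) : ℤ → ℚ)).det ≠ 0 := by
    rw [det_map_cast, hdet]; norm_num
  rw [actP1, dif_pos hg, Projectivization.map_mk]
  rfl


lemma cusp_reduce (p : ℕ) [Fact p.Prime] (n : ℕ) (hn : 1 ≤ n) (A : ℕ) (hA : ¬ p ∣ A) :
    ∃ M : Matrix.SpecialLinearGroup (Fin 2) ℤ, M ∈ CongruenceSubgroup.Gamma1 p ∧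
      actP1 M.1 (ratPt ((A : ℚ) / (p : ℚ) ^ (n + 1))) =
        ratPt ((((A : ZMod p)).val : ℚ) / (p : ℚ)) := by
  have hp : p.Prime := Fact.out
  have hp0 : (p : ℚ) ≠ 0 := by exact_mod_cast hp.ne_zero
  have hpZ : Prime ((p : ℤ)) := Nat.prime_iff_prime_int.mp hp
  have hAp : ¬ ((p : ℤ) ∣ (A : ℤ)) := by exact_mod_cast hA
  have hcop : IsCoprime ((A : ℤ)) ((p : ℤ) ^ n) :=
    ((hpZ.irreducible.coprime_iff_not_dvd.mpr hAp).symm).pow_right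
  obtain ⟨u, v, huv⟩ := hcop
  have hA0 : ((A : ZMod p)) ≠ 0 := fun h => hA ((ZMod.natCast_eq_zero_iff A p).mp h)
  set t : ℤ := ((((1 - v : ℤ) : ZMod p) * ((A : ZMod p))⁻¹).val : ℤ) with ht
  set γ' : ℤ := u - t * (p : ℤ) ^ n with hγ'
  set δ : ℤ := v + t * (A : ℤ) with hδdef
  have h1 : γ' * (A : ℤ) + δ * (p : ℤ) ^ n = 1 := by
    rw [hγ', hδdef]; linear_combination huv
  have hδ : ((δ : ZMod p)) = 1 := by
    rw [hδdef, ht]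
    push_cast [ZMod.natCast_val, ZMod.cast_id]
    rw [mul_assoc, inv_mul_cancel₀ hA0]
    ring
  set r : ℕ := ((A : ZMod p)).val with hrdef
  have hr : ((r : ZMod p)) = ((A : ZMod p)) := by
    rw [hrdef, ZMod.natCast_val, ZMod.cast_id]
  have hdvd : (((r : ℤ) * δ - (A : ℤ) : ℤ) : ZMod p) = 0 := by
    push_cast
    rw [hr, hδ]
    ring
  obtain ⟨β, hβ⟩ := (ZMod.intCast_zmod_eq_zero_iff_dvd _ p).mp hdvd
  have hβ' : (r : ℤ) * δ - (A : ℤ) = (p : ℤ) * β := hβ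
  set M : Matrix (Fin 2) (Fin 2) ℤ :=
    !![(r : ℤ) * γ' + (p : ℤ) ^ n, β; (p : ℤ) * γ', δ] with hM
  have hdet : M.det = 1 := by
    rw [hM, Matrix.det_fin_two_of]
    linear_combination h1 + γ' * hβ'
  refine ⟨⟨M, hdet⟩, ?_, ?_⟩
  · refine (CongruenceSubgroup.Gamma1_mem p ⟨M, hdet⟩).mpr ?_
    have hcast := congrArg (Int.cast : ℤ → ZMod p) h1
    push_cast at hcast
    rw [ZMod.natCast_self] at hcast
    rw [zero_pow (by omega : n ≠ 0)] at hcast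
    simp only [mul_zero, add_zero] at hcast
    have hM00 : M 0 0 = (r : ℤ) * γ' + (p : ℤ) ^ n := by rw [hM]; rfl
    have hM11 : M 1 1 = δ := by rw [hM]; rfl
    have hM10 : M 1 0 = (p : ℤ) * γ' := by rw [hM]; rfl
    refine ⟨?_, ?_, ?_⟩
    · show (((M 0 0 : ℤ)) : ZMod p) = 1
      rw [hM00]
      push_cast
      rw [ZMod.natCast_self, zero_pow (by omega : n ≠ 0), hr]
      linear_combination hcast
    · show (((M 1 1 : ℤ)) : ZMod p) = 1
      rw [hM11]; exact hδ
    · show (((M 1 0 : ℤ)) : ZMod p) = 0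
      rw [hM10]
      push_cast
      rw [ZMod.natCast_self]
      ring
  · have e1 : ((r : ℤ) * γ' + (p : ℤ) ^ n) * (A : ℤ) + β * (p : ℤ) ^ (n + 1) = (r : ℤ) := by
      linear_combination (r : ℤ) * h1 - (p : ℤ) ^ n * hβ'
    have e2 : ((p : ℤ) * γ') * (A : ℤ) + δ * (p : ℤ) ^ (n + 1) = (p : ℤ) := by
      linear_combination (p : ℤ) * h1
    rw [ratPt_mk _ _ (pow_ne_zero _ hp0), actP1_mk _ hdet, ratPt_mk _ _ hp0]
    have hvec : (M.map ((↑) : ℤ → ℚ)).mulVec ![(A : ℚ), (p : ℚ) ^ (n + 1)] =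
        ![(r : ℚ), (p : ℚ)] := by
      funext i
      fin_cases i
      · show ((M.map ((↑) : ℤ → ℚ)).mulVec ![(A : ℚ), (p : ℚ) ^ (n + 1)]) 0 = (r : ℚ)
        simp [Matrix.mulVec, dotProduct, Fin.sum_univ_two, Matrix.map_apply, hM]
        exact_mod_cast congrArg (Int.cast : ℤ → ℚ) e1
      · show ((M.map ((↑) : ℤ → ℚ)).mulVec ![(A : ℚ), (p : ℚ) ^ (n + 1)]) 1 = (p : ℚ)
        simp [Matrix.mulVec, dotProduct, Fin.sum_univ_two, Matrix.map_apply, hM]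
        exact_mod_cast congrArg (Int.cast : ℤ → ℚ) e2
    rw [Projectivization.mk_eq_mk_iff']
    exact ⟨1, by rw [one_smul]; exact hvec.symm⟩


lemma unitsMap_coe {m k : ℕ} [NeZero m] (hm : k ∣ m) (u : (ZMod m)ˣ) :
    ((ZMod.unitsMap hm u : ZMod k)) = (((u : ZMod m)).val : ZMod k) := by
  rw [ZMod.unitsMap_def, Units.coe_map, ZMod.natCast_val]
  rfl

lemma exists_pow_eq {G : Type} [Group G] [Fintype G] (γ : G) (N : ℕ) (hN0 : 0 < N)
    (hcard : Fintype.card G = N) (hord : orderOf γ = N) (g : G) :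
    ∃ j, j < N ∧ γ ^ j = g := by
  have htop : Subgroup.zpowers γ = ⊤ := by
    apply Subgroup.eq_top_of_card_eq
    rw [Nat.card_zpowers, hord, Nat.card_eq_fintype_card, hcard]
  have hg : g ∈ Subgroup.zpowers γ := htop ▸ Subgroup.mem_top g
  obtain ⟨k, hk⟩ := Subgroup.mem_zpowers_iff.mp hg
  have hNZ : (0:ℤ) < (N:ℤ) := by exact_mod_cast hN0
  have h1 : 0 ≤ k % (N:ℤ) := Int.emod_nonneg k (by omega)
  have h2 : k % (N:ℤ) < N := Int.emod_lt_of_pos k hNZ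
  refine ⟨(k % (N:ℤ)).toNat, by omega, ?_⟩
  have : γ ^ ((k % (N:ℤ)).toNat : ℤ) = γ ^ k := by
    rw [Int.toNat_of_nonneg h1, ← hord, zpow_mod_orderOf]
  rw [← zpow_natCast, this, hk]

lemma fiber_sum {p n : ℕ} [Fact p.Prime] [NeZero (p ^ (n + 1))] {G : Type} [CommGroup G]
    [Fintype G] (hG : Fintype.card G = p ^ n) (π : (ZMod (p ^ (n + 1)))ˣ →* G)
    (hπ : Function.Surjective π)
    {M : Type} [AddCommMonoid M] (F : (ZMod p)ˣ → M) (g : G) :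
    ∑ u ∈ Finset.univ.filter (fun u => π u = g),
      F (ZMod.unitsMap (dvd_pow_self p (Nat.succ_ne_zero n)) u) = ∑ b : (ZMod p)ˣ, F b := by
  classical
  have hp : p.Prime := Fact.out
  set ρ : (ZMod (p ^ (n + 1)))ˣ →* (ZMod p)ˣ :=
    ZMod.unitsMap (dvd_pow_self p (Nat.succ_ne_zero n)) with hρ
  have hρs : Function.Surjective ρ := ZMod.unitsMap_surjective _
  have hcardU : Nat.card (ZMod (p ^ (n + 1)))ˣ = p ^ n * (p - 1) := by
    rw [Nat.card_eq_fintype_card, ZMod.card_units_eq_totient,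
      Nat.totient_prime_pow hp (Nat.succ_pos n)]
    simp
  have hpn0 : 0 < p ^ n := pow_pos hp.pos n
  have hp10 : 0 < p - 1 := by have := hp.two_le; omega
  -- card of kernels
  have hker : ∀ {H : Type} [Group H] (f : (ZMod (p ^ (n + 1)))ˣ →* H)
      (hf : Function.Surjective f) (c : ℕ), Nat.card H = c →
      c * Nat.card f.ker = p ^ n * (p - 1) := by
    intro H _ f hf c hc
    have h2 := Subgroup.card_eq_card_quotient_mul_card_subgroup f.ker
    have h3 : Nat.card ((ZMod (p ^ (n + 1)))ˣ ⧸ f.ker) = c := by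
      rw [Nat.card_congr (QuotientGroup.quotientKerEquivOfSurjective f hf).toEquiv, hc]
    rw [h2, h3] at hcardU
    exact hcardU
  have hkerπ : Nat.card π.ker = p - 1 := by
    have := hker π hπ (p ^ n) (by rw [Nat.card_eq_fintype_card, hG])
    exact Nat.eq_of_mul_eq_mul_left hpn0 (by omega)
  have hkerρ : Nat.card ρ.ker = p ^ n := by
    have := hker ρ hρs (p - 1) (by rw [Nat.card_eq_fintype_card, ZMod.card_units p])
    exact Nat.eq_of_mul_eq_mul_left hp10 (by rw [this]; ring)
  -- injectivity on the fiber
  have hinj : ∀ u v : (ZMod (p ^ (n + 1)))ˣ, π u = π v → ρ u = ρ v → u = v := by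
    intro u v h1 h2
    have hkπ : u * v⁻¹ ∈ π.ker := by
      rw [MonoidHom.mem_ker, map_mul, map_inv, h1, mul_inv_cancel]
    have hkρ : u * v⁻¹ ∈ ρ.ker := by
      rw [MonoidHom.mem_ker, map_mul, map_inv, h2, mul_inv_cancel]
    have d1 : orderOf (u * v⁻¹) ∣ p - 1 := by
      rw [← hkerπ, ← Subgroup.orderOf_mk _ hkπ]
      exact orderOf_dvd_natCard _
    have d2 : orderOf (u * v⁻¹) ∣ p ^ n := by
      rw [← hkerρ, ← Subgroup.orderOf_mk _ hkρ]
      exact orderOf_dvd_natCard _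
    have hcop : Nat.Coprime (p - 1) (p ^ n) := by
      apply Nat.Coprime.pow_right
      exact Nat.coprime_comm.mp (hp.coprime_iff_not_dvd.mpr
        (fun hdvd => by have := Nat.le_of_dvd hp10 hdvd; omega))
    have : orderOf (u * v⁻¹) = 1 := Nat.eq_one_of_dvd_coprimes hcop d1 d2
    have := orderOf_eq_one_iff.mp this
    rwa [mul_inv_eq_one] at this
  -- fiber has at least p - 1 elements
  obtain ⟨u₀, hu₀⟩ := hπ g
  have hcardfib : (p - 1 : ℕ) ≤ (Finset.univ.filter (fun u => π u = g)).card := by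
    have h4 : ∀ k : π.ker, ((k : (ZMod (p ^ (n + 1)))ˣ) * u₀) ∈
        Finset.univ.filter (fun u => π u = g) := by
      intro k
      simp only [Finset.mem_filter, Finset.mem_univ, true_and, map_mul, hu₀]
      rw [MonoidHom.mem_ker.mp k.2, one_mul]
    calc (p - 1 : ℕ) = Nat.card π.ker := hkerπ.symm
      _ = (Finset.univ : Finset π.ker).card := by
          rw [Nat.card_eq_fintype_card]; exact (Finset.card_univ).symm
      _ ≤ _ := Finset.card_le_card_of_injOn (fun k => (k : (ZMod (p ^ (n + 1)))ˣ) * u₀)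
          (fun k _ => h4 k) (fun a _ b _ h => by
            apply Subtype.ext
            exact mul_right_cancel h)
  -- the sum bijection
  refine Finset.sum_bij (fun u _ => ρ u) (fun a _ => Finset.mem_univ _) ?_ ?_ (fun a _ => rfl)
  · intro a ha b hb h
    exact hinj a b (by
      have := (Finset.mem_filter.mp ha).2
      rw [this, (Finset.mem_filter.mp hb).2]) h
  · intro b _
    obtain ⟨a, ha, hab⟩ := Finset.surj_on_of_inj_on_of_card_le
      (fun u (_ : u ∈ Finset.univ.filter (fun u => π u = g)) => ρ u)
      (fun a _ => Finset.mem_univ _)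
      (fun a₁ a₂ h₁ h₂ h => hinj a₁ a₂ (by
        rw [(Finset.mem_filter.mp h₁).2, (Finset.mem_filter.mp h₂).2]) h)
      (by rw [Finset.card_univ, ZMod.card_units p]; exact hcardfib) b (Finset.mem_univ b)
    exact ⟨a, ha, hab.symm⟩

end MTaux

namespace MTaux

lemma of_eq_sum_T (p : ℕ) [Fact p.Prime] {G : Type} [CommGroup G] (γ : G) (N j : ℕ)
    (hj : j < N) :
    (MonoidAlgebra.of ℤ_[p] G (γ ^ j)) =
      ∑ i ∈ Finset.range N, ((j.choose i : ℤ_[p])) • (MonoidAlgebra.of ℤ_[p] G γ - 1) ^ i := by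
  rw [map_pow]
  have hγT : MonoidAlgebra.of ℤ_[p] G γ = (MonoidAlgebra.of ℤ_[p] G γ - 1) + 1 := by ring
  conv_lhs => rw [hγT]
  rw [add_pow]
  rw [Finset.sum_subset (Finset.range_subset_range.mpr (by omega : j + 1 ≤ N))
    (fun i _ hi => by
      rw [Nat.choose_eq_zero_of_lt (by simpa using hi)]
      simp)]
  refine Finset.sum_congr rfl fun i _ => ?_
  rw [one_pow, mul_one, mul_comm, ← nsmul_eq_mul, ← Nat.cast_smul_eq_nsmul ℤ_[p]]

end MTaux

end


/-- Theorem 4.6: let `p` be an odd prime and `n ≥ 1`.  If `φ` is a weight-0 boundary modular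
symbol of level `Γ₁(p)` with values in `ℤ/pℤ` (a `Γ₁(p)`-invariant function on `P¹(ℚ)`) such
that `∑_{a ∈ (ℤ/pℤ)ˣ} (φ({∞})(1) - φ({a/p})(1)) ≢ 0 (mod p)`, then the Iwasawa λ-invariant of
the level-`n` Mazur–Tate element `θ_{n,φ} ∈ ℤ_p[𝒢ₙ]` (with values of `φ` lifted to `ℤ_p`)
satisfies `λ(θ_{n,φ}) = pⁿ - 1` (computed with respect to any generator `γ` of `𝒢ₙ`). -/
theorem lambda_of_mazur_tate_boundary_symbol
    (p : ℕ) [Fact p.Prime] (hodd : Odd p) (n : ℕ) (hn : 1 ≤ n)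
    (φ : P1 → ZMod p)
    (hφ : ∀ γ ∈ CongruenceSubgroup.Gamma1 p, ∀ z : P1, φ (actP1 γ.1 z) = φ z)
    (hC : (∑ b : (ZMod p)ˣ, (φ inftyPt - φ (ratPt (((b : ZMod p).val : ℚ) / (p : ℚ))))) ≠ 0)
    (G : Type) [CommGroup G] [Fintype G] (hG : Fintype.card G = p ^ n)
    (π : (ZMod (p ^ (n + 1)))ˣ →* G) (hπ : Function.Surjective π) :
    ∀ γ : G, orderOf γ = p ^ n →
      ∃ m : ℕ, hasMuLambda p (p ^ n) γ
        (MTel p n π (fun a =>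
          ((φ inftyPt).val : ℤ_[p]) -
            ((φ (ratPt (((a : ZMod (p ^ (n + 1))).val : ℚ) / (p : ℚ) ^ (n + 1)))).val : ℤ_[p])))
        m (p ^ n - 1) := by
  classical
  intro γ hγ
  have hp : p.Prime := Fact.out
  have hpn0 : 0 < p ^ n := pow_pos hp.pos n
  set ρ : (ZMod (p ^ (n + 1)))ˣ →* (ZMod p)ˣ :=
    ZMod.unitsMap (dvd_pow_self p (Nat.succ_ne_zero n)) with hρdef
  set F : (ZMod p)ˣ → ZMod p :=
    fun b => φ inftyPt - φ (ratPt (((b : ZMod p).val : ℚ) / (p : ℚ))) with hF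
  set CC : ZMod p := ∑ b : (ZMod p)ˣ, F b with hCC
  set c : (ZMod (p ^ (n + 1)))ˣ → ℤ_[p] := fun a =>
    ((φ inftyPt).val : ℤ_[p]) -
      ((φ (ratPt (((a : ZMod (p ^ (n + 1))).val : ℚ) / (p : ℚ) ^ (n + 1)))).val : ℤ_[p])
    with hc
  -- reduction of the values of c mod p
  have hcu : ∀ u, PadicInt.toZMod (c u) = F (ρ u) := by
    intro u
    set A : ℕ := ((u : ZMod (p ^ (n + 1))).val) with hA
    have hAp : ¬ p ∣ A := by
      intro hd
      have h2 : p ∣ Nat.gcd A (p ^ (n + 1)) :=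
        Nat.dvd_gcd hd (dvd_pow_self p (Nat.succ_ne_zero n))
      rw [ZMod.val_coe_unit_coprime u] at h2
      exact absurd (Nat.le_of_dvd one_pos h2) (by have := hp.two_le; omega)
    obtain ⟨M, hM1, hM2⟩ := MTaux.cusp_reduce p n hn A hAp
    have hval : φ (ratPt ((A : ℚ) / (p : ℚ) ^ (n + 1))) =
        φ (ratPt ((((A : ZMod p)).val : ℚ) / (p : ℚ))) := by
      rw [← hM2]; exact (hφ M hM1 _).symm
    have hρu : ((ρ u : ZMod p)) = ((A : ZMod p)) :=
      MTaux.unitsMap_coe _ u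
    have hv : ∀ x : ZMod p, PadicInt.toZMod ((x.val : ℤ_[p])) = x := by
      intro x
      rw [map_natCast, ZMod.natCast_val, ZMod.cast_id]
    have hgoal : PadicInt.toZMod (c u) =
        φ inftyPt - φ (ratPt ((A : ℚ) / (p : ℚ) ^ (n + 1))) := by
      show PadicInt.toZMod (((φ inftyPt).val : ℤ_[p]) -
        ((φ (ratPt ((A : ℚ) / (p : ℚ) ^ (n + 1)))).val : ℤ_[p])) = _
      rw [map_sub, hv, hv]
    have hFv : F (ρ u) =
        φ inftyPt - φ (ratPt ((((ρ u : ZMod p)).val : ℚ) / (p : ℚ))) := rfl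
    rw [hgoal, hval, hFv, hρu]
  -- discrete logarithm
  have hjex : ∀ g : G, ∃ j, j < p ^ n ∧ γ ^ j = g := fun g =>
    MTaux.exists_pow_eq γ (p ^ n) hpn0 hG hγ g
  choose jf hjlt hjpow using hjex
  have hjsum : ∀ i : ℕ, ∑ g : G, ((jf g).choose i) = (p ^ n).choose (i + 1) := by
    intro i
    rw [← MTaux.hockey (p ^ n) i]
    refine Finset.sum_bij (fun g _ => jf g)
      (fun g _ => Finset.mem_range.mpr (hjlt g)) ?_ ?_ (fun g _ => rfl)
    · intro g₁ _ g₂ _ h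
      have h' : jf g₁ = jf g₂ := h
      rw [← hjpow g₁, ← hjpow g₂, h']
    · intro j hj
      refine ⟨γ ^ j, Finset.mem_univ _, ?_⟩
      have h1 : γ ^ (jf (γ ^ j)) = γ ^ j := hjpow _
      have h2 := pow_eq_pow_iff_modEq.mp h1
      rw [hγ] at h2
      have h3 := Nat.ModEq.eq_of_lt_of_lt h2 (hjlt _) (Finset.mem_range.mp hj)
      exact h3
  -- the T-adic coefficients
  set aa : ℕ → ℤ_[p] := fun i =>
    ∑ u : (ZMod (p ^ (n + 1)))ˣ, c u * (((jf (π u)).choose i : ℕ) : ℤ_[p]) with haa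
  -- key congruence
  have hkey : ∀ i : ℕ, PadicInt.toZMod (aa i) = CC * ((p ^ n).choose (i + 1) : ZMod p) := by
    intro i
    rw [haa]
    rw [map_sum]
    have hterm : ∀ u, PadicInt.toZMod (c u * (((jf (π u)).choose i : ℕ) : ℤ_[p])) =
        F (ρ u) * (((jf (π u)).choose i : ℕ) : ZMod p) := by
      intro u; rw [map_mul, hcu u, map_natCast]
    rw [Finset.sum_congr rfl fun u _ => hterm u]
    rw [← Finset.sum_fiberwise_of_maps_to (fun u (_ : u ∈ Finset.univ) => Finset.mem_univ (π u))
      (fun u => F (ρ u) * (((jf (π u)).choose i : ℕ) : ZMod p))]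
    have hfib : ∀ g : G, (∑ u ∈ Finset.univ.filter (fun u => π u = g),
        F (ρ u) * (((jf (π u)).choose i : ℕ) : ZMod p)) =
        CC * (((jf g).choose i : ℕ) : ZMod p) := by
      intro g
      have h1 : (∑ u ∈ Finset.univ.filter (fun u => π u = g),
          F (ρ u) * (((jf (π u)).choose i : ℕ) : ZMod p)) =
          ∑ u ∈ Finset.univ.filter (fun u => π u = g),
          F (ρ u) * (((jf g).choose i : ℕ) : ZMod p) := by
        refine Finset.sum_congr rfl fun u hu => ?_
        rw [(Finset.mem_filter.mp hu).2]
      rw [h1, ← Finset.sum_mul, hρdef,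
        MTaux.fiber_sum hG π hπ F g, ← hCC]
    rw [Finset.sum_congr rfl fun g _ => hfib g, ← Finset.mul_sum, ← Nat.cast_sum, hjsum i]
  refine ⟨0, aa, ?_, ?_, ?_, ?_⟩
  · -- the expansion of the Mazur-Tate element
    simp only [MTel]
    have h1 : ∀ u : (ZMod (p ^ (n + 1)))ˣ, c u • (MonoidAlgebra.of ℤ_[p] G (π u)) =
        ∑ i ∈ Finset.range (p ^ n), (c u * (((jf (π u)).choose i : ℕ) : ℤ_[p])) •
          (MonoidAlgebra.of ℤ_[p] G γ - 1) ^ i := by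
      intro u
      conv_lhs => rw [← hjpow (π u)]
      rw [MTaux.of_eq_sum_T p γ (p ^ n) (jf (π u)) (hjlt (π u)), Finset.smul_sum]
      exact Finset.sum_congr rfl fun i _ => (smul_smul _ _ _)
    rw [Finset.sum_congr rfl fun u _ => h1 u, Finset.sum_comm]
    exact Finset.sum_congr rfl fun i _ => (Finset.sum_smul).symm
  · intro i _
    simpa using one_dvd (aa i)
  · intro i hi
    have h0 : PadicInt.toZMod (aa i) = 0 := by
      rw [hkey i]
      have hch : ((p ^ n).choose (i + 1) : ZMod p) = 0 := by
        rw [ZMod.natCast_eq_zero_iff]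
        exact hp.dvd_choose_pow (Nat.succ_ne_zero i) (by omega)
      rw [hch, mul_zero]
    have hmem : aa i ∈ RingHom.ker (PadicInt.toZMod (p := p)) := h0
    rw [PadicInt.ker_toZMod, PadicInt.maximalIdeal_eq_span_p,
      Ideal.mem_span_singleton] at hmem
    simpa using hmem
  · intro hdvd
    have h0 : PadicInt.toZMod (aa (p ^ n - 1)) = 0 := by
      obtain ⟨x, hx⟩ := hdvd
      rw [hx]
      simp
    rw [hkey, (by omega : (p ^ n - 1) + 1 = p ^ n), Nat.choose_self] at h0
    simp only [Nat.cast_one, mul_one] at h0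
    exact hC h0
end
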